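/- Let a_0,…,a_{n−1} and b_0,…,b_{2^n−1} be real numbers each with absolute value at most 1, and let sign(i,j) = 2·χ(i,j) − 1 where χ(i,j) ∈ {0,1} is the i-th binary digit of j. Then |∑_{i=0}^{n−1} ∑_{j=0}^{2^n−1} a_i b_j sign(i,j)| ≤ 2^n √n. -/

import Mathlib

private noncomputable def sgn (i j : ℕ) : ℝ := 2 * ((j / 2 ^ i % 2 : ℕ) : ℝ) - 1

private lemma sgn_sq (i j : ℕ) : sgn i j * sgn i j = 1 := by
  unfold sgn
  rcases Nat.mod_two_eq_zero_or_one (j / 2 ^ i) with h | h <;> rw [h] <;> push_cast <;> ring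

private lemma sgn_shift (i n j : ℕ) (hi : i < n) : sgn i (2 ^ n + j) = sgn i j := by
  unfold sgn
  congr 2
  have h2 : 2 ^ n = 2 ^ i * 2 ^ (n - i) := by
    rw [← pow_add]; congr 1; omega
  rw [h2, Nat.mul_add_div (Nat.two_pow_pos i)]
  have h3 : 2 ^ (n - i) = 2 * 2 ^ (n - i - 1) := by
    rw [← pow_succ']; congr 1; omega
  rw [h3, add_comm, Nat.add_mul_mod_self_left]

private lemma sgn_top_lt (n j : ℕ) (hj : j < 2 ^ n) : sgn n j = -1 := by
  unfold sgn
  rw [Nat.div_eq_of_lt hj]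
  norm_num

private lemma sgn_top_ge (n j : ℕ) (hj : j < 2 ^ n) : sgn n (2 ^ n + j) = 1 := by
  unfold sgn
  have h : (2 ^ n + j) / 2 ^ n = 1 := by
    rw [add_comm, Nat.add_div_right _ (Nat.two_pow_pos n),
      Nat.div_eq_of_lt hj]
  rw [h]; norm_num

private lemma orth (n : ℕ) : ∀ i k, i < n → k < n → i ≠ k →
    ∑ j ∈ Finset.range (2 ^ n), sgn i j * sgn k j = 0 := by
  induction n with
  | zero => intro i k hi; omega
  | succ n ih =>
    intro i k hi hk hik
    have hsplit : 2 ^ (n + 1) = 2 ^ n + 2 ^ n := by ring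
    rw [hsplit, Finset.sum_range_add]
    rcases Nat.lt_or_ge i n with hi' | hi'
    · rcases Nat.lt_or_ge k n with hk' | hk'
      · have : ∀ j ∈ Finset.range (2 ^ n),
            sgn i (2 ^ n + j) * sgn k (2 ^ n + j) = sgn i j * sgn k j := by
          intro j _; rw [sgn_shift i n j hi', sgn_shift k n j hk']
        rw [Finset.sum_congr rfl this, ih i k hi' hk' hik, zero_add]
      · have hkn : k = n := by omega
        rw [hkn]
        have h1 : ∀ j ∈ Finset.range (2 ^ n), sgn i j * sgn n j = -sgn i j := by
          intro j hj; rw [sgn_top_lt n j (Finset.mem_range.mp hj)]; ring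
        have h2 : ∀ j ∈ Finset.range (2 ^ n),
            sgn i (2 ^ n + j) * sgn n (2 ^ n + j) = sgn i j := by
          intro j hj
          rw [sgn_shift i n j hi', sgn_top_ge n j (Finset.mem_range.mp hj)]; ring
        rw [Finset.sum_congr rfl h1, Finset.sum_congr rfl h2, Finset.sum_neg_distrib]
        ring
    · have hin : i = n := by omega
      rw [hin]
      have hk' : k < n := by omega
      have h1 : ∀ j ∈ Finset.range (2 ^ n), sgn n j * sgn k j = -sgn k j := by
        intro j hj; rw [sgn_top_lt n j (Finset.mem_range.mp hj)]; ring
      have h2 : ∀ j ∈ Finset.range (2 ^ n),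
          sgn n (2 ^ n + j) * sgn k (2 ^ n + j) = sgn k j := by
        intro j hj
        rw [sgn_shift k n j hk', sgn_top_ge n j (Finset.mem_range.mp hj)]; ring
      rw [Finset.sum_congr rfl h1, Finset.sum_congr rfl h2, Finset.sum_neg_distrib]
      ring

theorem stmt_5 (n : ℕ) (a b : ℕ → ℝ)
    (ha : ∀ i < n, |a i| ≤ 1) (hb : ∀ j < 2 ^ n, |b j| ≤ 1) :
    |∑ i ∈ Finset.range n, ∑ j ∈ Finset.range (2 ^ n),
        a i * b j * (2 * ((j / 2 ^ i % 2 : ℕ) : ℝ) - 1)|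
      ≤ 2 ^ n * Real.sqrt n := by
  set c : ℕ → ℝ := fun j => ∑ i ∈ Finset.range n, a i * sgn i j with hc
  -- rewrite sum as ∑_j b j * c j
  have hswap : ∑ i ∈ Finset.range n, ∑ j ∈ Finset.range (2 ^ n),
      a i * b j * (2 * ((j / 2 ^ i % 2 : ℕ) : ℝ) - 1)
      = ∑ j ∈ Finset.range (2 ^ n), b j * c j := by
    rw [Finset.sum_comm]
    refine Finset.sum_congr rfl fun j _ => ?_
    rw [hc, Finset.mul_sum]
    refine Finset.sum_congr rfl fun i _ => ?_
    unfold sgn; ring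
  -- key: ∑_j (c j)^2 = 2^n * ∑_i (a i)^2
  have hkey : ∑ j ∈ Finset.range (2 ^ n), c j ^ 2
      = 2 ^ n * ∑ i ∈ Finset.range n, a i ^ 2 := by
    have : ∀ j, c j ^ 2 = ∑ i ∈ Finset.range n, ∑ k ∈ Finset.range n,
        (a i * a k) * (sgn i j * sgn k j) := by
      intro j
      rw [sq, hc, Finset.sum_mul_sum]
      exact Finset.sum_congr rfl fun i _ => Finset.sum_congr rfl fun k _ => by ring
    simp_rw [this]
    rw [Finset.sum_comm]
    rw [Finset.sum_congr rfl fun i _ => Finset.sum_comm]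
    have : ∀ i ∈ Finset.range n, ∀ k ∈ Finset.range n,
        ∑ j ∈ Finset.range (2 ^ n), (a i * a k) * (sgn i j * sgn k j)
        = if i = k then 2 ^ n * a i ^ 2 else 0 := by
      intro i hi k hk
      rw [← Finset.mul_sum]
      rcases eq_or_ne i k with rfl | hik
      · simp only [if_pos rfl]
        simp_rw [sgn_sq]
        simp [sq]; ring
      · rw [orth n i k (Finset.mem_range.mp hi) (Finset.mem_range.mp hk) hik,
          mul_zero, if_neg hik]
    rw [Finset.sum_congr rfl fun i hi => Finset.sum_congr rfl (this i hi)]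
    simp only [Finset.sum_ite_eq, Finset.sum_ite_eq', Finset.mem_range, Finset.mul_sum]
    exact Finset.sum_congr rfl fun i hi => by rw [if_pos (Finset.mem_range.mp hi)]
  have hsumsq : ∑ i ∈ Finset.range n, a i ^ 2 ≤ n := by
    calc ∑ i ∈ Finset.range n, a i ^ 2 ≤ ∑ i ∈ Finset.range n, 1 := by
          refine Finset.sum_le_sum fun i hi => ?_
          have := ha i (Finset.mem_range.mp hi)
          nlinarith [abs_nonneg (a i), sq_abs (a i)]
      _ = n := by simp
  -- bound |∑ b c| ≤ ∑ |c|
  rw [hswap]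
  have h1 : |∑ j ∈ Finset.range (2 ^ n), b j * c j|
      ≤ ∑ j ∈ Finset.range (2 ^ n), |c j| := by
    refine (Finset.abs_sum_le_sum_abs _ _).trans (Finset.sum_le_sum fun j hj => ?_)
    rw [abs_mul]
    have := hb j (Finset.mem_range.mp hj)
    nlinarith [abs_nonneg (c j), abs_nonneg (b j)]
  -- Cauchy–Schwarz
  have h2 : (∑ j ∈ Finset.range (2 ^ n), |c j|) ^ 2
      ≤ (2 ^ n : ℝ) * ∑ j ∈ Finset.range (2 ^ n), c j ^ 2 := by
    have := sq_sum_le_card_mul_sum_sq (s := Finset.range (2 ^ n)) (f := fun j => |c j|)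
    simpa [sq_abs] using this
  have h3 : (∑ j ∈ Finset.range (2 ^ n), |c j|) ^ 2 ≤ (2 ^ n * Real.sqrt n) ^ 2 := by
    calc (∑ j ∈ Finset.range (2 ^ n), |c j|) ^ 2
        ≤ (2 ^ n : ℝ) * (2 ^ n * ∑ i ∈ Finset.range n, a i ^ 2) := by rw [← hkey]; exact h2
      _ ≤ (2 ^ n : ℝ) * (2 ^ n * n) := by
          gcongr
      _ = (2 ^ n * Real.sqrt n) ^ 2 := by
          rw [mul_pow, Real.sq_sqrt (by positivity)]
          ring
  have h4 : ∑ j ∈ Finset.range (2 ^ n), |c j| ≤ 2 ^ n * Real.sqrt n := by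
    have hnn : (0:ℝ) ≤ 2 ^ n * Real.sqrt n := by positivity
    nlinarith [Finset.sum_nonneg (fun j (hj : j ∈ Finset.range (2^n)) => abs_nonneg (c j))]
  linarith
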